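/- Let X be a smooth real normed linear space with a strongly orthonormal Hamel basis {x_1, ..., x_n} in the sense of Birkhoff-James, and let y = α_1 x_1 + α_2 x_2 + ... + α_n x_n. If x_1 is Birkhoff-James orthogonal to y, then α_1 = 0. -/

import Mathlib

/-- `x` together with the family is strongly orthonormal *relative to* the element `x i₀`
in the sense of Birkhoff-James: all members are unit vectors and
`‖x i₀‖ < ‖x i₀ + ∑_{j ≠ i₀} c j • x j‖` whenever not all the `c j` (`j ≠ i₀`) vanish. -/
def StronglyOrthRel {X : Type*} [NormedAddCommGroup X] [NormedSpace ℝ X]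
    {n : ℕ} (x : Fin n → X) (i₀ : Fin n) : Prop :=
  (∀ i, ‖x i‖ = 1) ∧
    ∀ c : Fin n → ℝ, (∃ j, j ≠ i₀ ∧ c j ≠ 0) →
      ‖x i₀‖ < ‖x i₀ + ∑ j ∈ Finset.univ.erase i₀, c j • x j‖

/-- A finite family of unit vectors that is strongly orthonormal in the sense of
Birkhoff-James. -/
def StronglyOrthSet {X : Type*} [NormedAddCommGroup X] [NormedSpace ℝ X]
    {n : ℕ} (x : Fin n → X) : Prop :=
  ∀ i, StronglyOrthRel x i


/-- A real normed linear space is smooth if every nonzero vector has a unique norming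
functional: a continuous linear functional `f` with `‖f‖ = 1` and `f x = ‖x‖`. -/
def SmoothSpace (X : Type*) [NormedAddCommGroup X] [NormedSpace ℝ X] : Prop :=
  ∀ x : X, x ≠ 0 → ∃! f : X →L[ℝ] ℝ, ‖f‖ = 1 ∧ f x = ‖x‖


lemma key_norming {X : Type*} [NormedAddCommGroup X] [NormedSpace ℝ X]
    {u y : X} (hu : ‖u‖ = 1) (h : ∀ l : ℝ, ‖u‖ ≤ ‖u + l • y‖) :
    ∃ f : X →L[ℝ] ℝ, (‖f‖ = 1 ∧ f u = ‖u‖) ∧ f y = 0 := by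
  have hu0 : u ≠ 0 := by intro h0; rw [h0, norm_zero] at hu; norm_num at hu
  have hab : ∀ a b : ℝ, |a| ≤ ‖a • u + b • y‖ := by
    intro a b
    rcases eq_or_ne a 0 with ha | ha
    · simp [ha]
    · have : ‖a • u + b • y‖ = |a| * ‖u + (b / a) • y‖ := by
        rw [← Real.norm_eq_abs, ← norm_smul, smul_add, smul_smul]
        field_simp
      rw [this]
      calc |a| = |a| * ‖u‖ := by rw [hu, mul_one]
        _ ≤ |a| * ‖u + (b / a) • y‖ := by
            apply mul_le_mul_of_nonneg_left (h _) (abs_nonneg _)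
  by_cases hy : y ∈ Submodule.span ℝ {u}
  · -- then y = c • u, and orthogonality forces y = 0
    obtain ⟨c, hc⟩ := Submodule.mem_span_singleton.mp hy
    have hc0 : c = 0 := by
      by_contra hc0
      have := h (-(1/c))
      rw [← hc] at this
      have h2 : u + (-(1/c)) • (c • u) = 0 := by
        rw [smul_smul]; field_simp; simp
      rw [h2, norm_zero, hu] at this; linarith
    have hy0 : y = 0 := by rw [← hc, hc0, zero_smul]
    obtain ⟨g, hg1, hg2⟩ := exists_dual_vector ℝ u (norm_ne_zero_iff.mpr hu0)
    exact ⟨g, ⟨hg1, hg2⟩, by simp [hy0]⟩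
  · -- linearly independent case
    have hli2 : LinearIndependent ℝ ![u, y] := by
      rw [linearIndependent_fin2]
      constructor
      · simpa using (fun h0 : y = 0 => hy (h0 ▸ Submodule.zero_mem _))
      · intro a ha
        simp only [Matrix.cons_val_one, Matrix.head_cons, Matrix.cons_val_zero] at ha
        have ha0 : a ≠ 0 := by rintro rfl; simp at ha; exact hu0 ha.symm
        apply hy
        rw [Submodule.mem_span_singleton]
        exact ⟨a⁻¹, by rw [← ha, smul_smul, inv_mul_cancel₀ ha0, one_smul]⟩
    set p := Submodule.span ℝ (Set.range ![u, y]) with hp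
    let B : Module.Basis (Fin 2) ℝ p := Module.Basis.span hli2
    let lin : p →ₗ[ℝ] ℝ := B.constr ℝ ![(1 : ℝ), 0]
    have hBcoe : ∀ i, (B i : X) = ![u, y] i := fun i => by rw [Module.Basis.span_apply hli2 i]
    have hlinval : ∀ z : p, lin z = B.repr z 0 := by
      intro z
      conv_lhs => rw [← B.sum_repr z]
      rw [map_sum]
      rw [Fin.sum_univ_two]
      simp [lin, Module.Basis.constr_basis]
    have hz : ∀ z : p, ‖lin z‖ ≤ 1 * ‖z‖ := by
      intro z
      rw [one_mul, hlinval z, Real.norm_eq_abs]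
      have hrepr : (z : X) = B.repr z 0 • u + B.repr z 1 • y := by
        conv_lhs => rw [← B.sum_repr z]
        push_cast
        rw [Fin.sum_univ_two]
        simp [hBcoe 0, hBcoe 1]
      calc |B.repr z 0| ≤ ‖B.repr z 0 • u + B.repr z 1 • y‖ := hab _ _
        _ = ‖(z : X)‖ := by rw [hrepr]
        _ = ‖z‖ := rfl
    let F : p →L[ℝ] ℝ := LinearMap.mkContinuous lin 1 hz
    obtain ⟨g, hgext, hgnorm⟩ := exists_extension_norm_eq p F
    have hum : u ∈ p := Submodule.subset_span ⟨0, rfl⟩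
    have hym : y ∈ p := Submodule.subset_span ⟨1, rfl⟩
    have hB0 : B 0 = (⟨u, hum⟩ : p) := Subtype.ext (by rw [hBcoe 0]; rfl)
    have hB1 : B 1 = (⟨y, hym⟩ : p) := Subtype.ext (by rw [hBcoe 1]; rfl)
    have hgu : g u = 1 := by
      have h1 := hgext (B 0)
      have h2 : ((B 0 : p) : X) = u := by rw [hBcoe 0]; rfl
      rw [h2] at h1
      simpa [F, lin, Module.Basis.constr_basis] using h1
    have hgy : g y = 0 := by
      have h1 := hgext (B 1)
      have h2 : ((B 1 : p) : X) = y := by rw [hBcoe 1]; rfl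
      rw [h2] at h1
      simpa [F, lin, Module.Basis.constr_basis] using h1
    have hFnorm : ‖F‖ ≤ 1 := LinearMap.mkContinuous_norm_le lin zero_le_one hz
    have hgn : ‖g‖ = 1 := by
      apply le_antisymm (hgnorm ▸ hFnorm)
      have := g.le_opNorm u
      rw [hgu, hu, mul_one] at this
      simpa using this
    exact ⟨g, ⟨hgn, by rw [hgu, hu]⟩, hgy⟩

theorem stmt_12 {X : Type*} [NormedAddCommGroup X] [NormedSpace ℝ X] {n : ℕ}
    (hsm : SmoothSpace X) (x : Fin (n + 1) → X)
    (hli : LinearIndependent ℝ x) (hsp : Submodule.span ℝ (Set.range x) = ⊤)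
    (hso : StronglyOrthSet x) (α : Fin (n + 1) → ℝ)
    (horth : ∀ l : ℝ, ‖x 0‖ ≤ ‖x 0 + l • ∑ j, α j • x j‖) :
    α 0 = 0 := by
  obtain ⟨hunit, hstrict⟩ := hso 0
  have hu : ‖x 0‖ = 1 := hunit 0
  have hu0 : x 0 ≠ 0 := by intro h0; rw [h0, norm_zero] at hu; norm_num at hu
  set y : X := ∑ j, α j • x j with hy
  set w : X := ∑ j ∈ Finset.univ.erase 0, α j • x j with hw
  have hyw : y = α 0 • x 0 + w := by
    rw [hy, hw]
    exact (Finset.add_sum_erase Finset.univ (fun j => α j • x j)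
      (Finset.mem_univ (0 : Fin (n + 1)))).symm
  have h2 : ∀ l : ℝ, ‖x 0‖ ≤ ‖x 0 + l • w‖ := by
    intro l
    have hls : l • w = ∑ j ∈ Finset.univ.erase 0, (l * α j) • x j := by
      rw [hw, Finset.smul_sum]
      exact Finset.sum_congr rfl (fun j _ => by rw [smul_smul])
    rw [hls]
    by_cases hex : ∃ j, j ≠ 0 ∧ (l * α j) ≠ 0
    · exact le_of_lt (hstrict (fun j => l * α j) hex)
    · push_neg at hex
      have : ∑ j ∈ Finset.univ.erase 0, (l * α j) • x j = 0 :=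
        Finset.sum_eq_zero (fun j hj => by
          rw [hex j (Finset.mem_erase.mp hj).1, zero_smul])
      rw [this, add_zero]
  obtain ⟨f, hf, hfy⟩ := key_norming hu horth
  obtain ⟨g, hg, hgw⟩ := key_norming hu h2
  obtain ⟨F, _, hFuniq⟩ := hsm (x 0) hu0
  have hfg : f = g := (hFuniq f hf).trans (hFuniq g hg).symm
  have : (0 : ℝ) = α 0 := by
    calc (0 : ℝ) = f y := hfy.symm
      _ = α 0 * f (x 0) + f w := by rw [hyw]; simp
      _ = α 0 * 1 + 0 := by rw [hf.2, hu, hfg, hgw]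
      _ = α 0 := by ring
  exact this.symm
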